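/- In the Klein bottle group K = ⟨u, v | u v u v⁻¹ = 1⟩, the subgroup generated by x := u v^{2k} and y := v^{4k} is isomorphic to ℤ² (x and y commute and generate a free abelian group of rank 2), and it equals the kernel of the homomorphism θ : K → ℤ/(4k) defined by θ(u) = 2k and θ(v) = 1. -/

import Mathlib

/-- The single defining relator `u v u v⁻¹` of the Klein bottle group, on two generators
(`u` indexed by `true`, `v` indexed by `false`). -/
def kleinRels : Set (FreeGroup Bool) :=
  { FreeGroup.of true * FreeGroup.of false * FreeGroup.of true * (FreeGroup.of false)⁻¹ }

/-- The Klein bottle group `K = ⟨u, v | u v u v⁻¹ = 1⟩`. -/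
abbrev KleinGroup : Type := PresentedGroup kleinRels

/-- The generator `u` of the Klein bottle group. -/
def kleinU : KleinGroup := PresentedGroup.of true

/-- The generator `v` of the Klein bottle group. -/
def kleinV : KleinGroup := PresentedGroup.of false

lemma klein_rel : kleinU * kleinV * kleinU * kleinV⁻¹ = 1 := by
  have h : (FreeGroup.of true * FreeGroup.of false * FreeGroup.of true *
      (FreeGroup.of false)⁻¹) ∈ Subgroup.normalClosure kleinRels :=
    Subgroup.subset_normalClosure rfl
  have h2 : PresentedGroup.mk kleinRels (FreeGroup.of true * FreeGroup.of false *
      FreeGroup.of true * (FreeGroup.of false)⁻¹) = 1 := (QuotientGroup.eq_one_iff _).mpr h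
  simpa [kleinU, kleinV, PresentedGroup.of, map_mul, map_inv] using h2

lemma klein_conj : kleinV * kleinU * kleinV⁻¹ = kleinU⁻¹ := by
  have h2 : kleinU * (kleinV * kleinU * kleinV⁻¹) = 1 := by
    rw [← mul_assoc, ← mul_assoc]; exact klein_rel
  exact eq_inv_of_mul_eq_one_right h2

lemma klein_conj_zpow (a : ℤ) : kleinV * kleinU ^ a * kleinV⁻¹ = kleinU ^ (-a) := by
  have : kleinV * kleinU ^ a * kleinV⁻¹ = (MulAut.conj kleinV) (kleinU ^ a) := rfl
  rw [this, map_zpow]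
  have : (MulAut.conj kleinV) kleinU = kleinU⁻¹ := klein_conj
  rw [this, inv_zpow, zpow_neg]

lemma klein_vu (a : ℤ) : kleinV * kleinU ^ a = kleinU ^ (-a) * kleinV := by
  rw [← klein_conj_zpow a]; group

lemma klein_vinv_u (a : ℤ) : kleinV⁻¹ * kleinU ^ a = kleinU ^ (-a) * kleinV⁻¹ := by
  have h := klein_conj_zpow (-a)
  rw [neg_neg] at h
  rw [← h]; group

lemma klein_v2_u (a : ℤ) : kleinV ^ (2:ℕ) * kleinU ^ a = kleinU ^ a * kleinV ^ (2:ℕ) := by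
  calc kleinV ^ (2:ℕ) * kleinU ^ a = kleinV * (kleinV * kleinU ^ a) := by rw [sq, mul_assoc]
    _ = kleinV * (kleinU ^ (-a) * kleinV) := by rw [klein_vu]
    _ = (kleinV * kleinU ^ (-a)) * kleinV := by rw [mul_assoc]
    _ = (kleinU ^ a * kleinV) * kleinV := by rw [klein_vu, neg_neg]
    _ = kleinU ^ a * kleinV ^ (2:ℕ) := by rw [sq, mul_assoc]

lemma klein_comm_u_v2 : Commute kleinU (kleinV ^ (2:ℕ)) := by
  have := klein_v2_u 1
  rw [zpow_one] at this
  exact this.symm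

lemma klein_mem_top (g : KleinGroup) :
    g ∈ Subgroup.closure ({kleinU, kleinV} : Set KleinGroup) := by
  have h : Set.range (PresentedGroup.of : Bool → KleinGroup) = {kleinU, kleinV} := by
    ext x
    constructor
    · rintro ⟨(_ | _), rfl⟩
      · exact Or.inr rfl
      · exact Or.inl rfl
    · rintro (rfl | rfl)
      · exact ⟨true, rfl⟩
      · exact ⟨false, rfl⟩
  rw [← h, PresentedGroup.closure_range_of]
  trivial

lemma klein_normal_form (g : KleinGroup) : ∃ a b : ℤ, g = kleinU ^ a * kleinV ^ b := by
  have hg := klein_mem_top g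
  induction hg using Subgroup.closure_induction_left with
  | one => exact ⟨0, 0, by simp⟩
  | mul_left x hx y hy ih =>
    obtain ⟨a, b, rfl⟩ := ih
    rcases hx with rfl | rfl
    · exact ⟨1 + a, b, by rw [zpow_add, zpow_one, mul_assoc]⟩
    · refine ⟨-a, 1 + b, ?_⟩
      rw [← mul_assoc, klein_vu, mul_assoc, ← zpow_one_add]
  | inv_mul_cancel x hx y hy ih =>
    obtain ⟨a, b, rfl⟩ := ih
    rcases hx with rfl | rfl
    · exact ⟨-1 + a, b, by rw [zpow_add, zpow_neg_one, mul_assoc]⟩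
    · refine ⟨-a, -1 + b, ?_⟩
      rw [← mul_assoc, klein_vinv_u, mul_assoc, ← zpow_neg_one, ← zpow_add]

/-- The representation of the Klein group on `ℤ` by `u ↦ (· + 1)`, `v ↦ (-·)`. -/
noncomputable def kleinPhi : KleinGroup →* Equiv.Perm ℤ :=
  PresentedGroup.toGroup (f := fun b => if b then Equiv.addRight (1:ℤ) else Equiv.neg ℤ)
    (by
      rintro r hr
      rw [kleinRels, Set.mem_singleton_iff] at hr
      subst hr
      simp only [map_mul, map_inv, FreeGroup.lift_apply_of, if_pos, if_neg]
      ext x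
      simp [Equiv.Perm.mul_apply, Equiv.Perm.inv_def])

lemma kleinPhi_u : kleinPhi kleinU = Equiv.addRight (1:ℤ) := by
  simp [kleinPhi, kleinU, PresentedGroup.toGroup.of]

lemma kleinPhi_v : kleinPhi kleinV = Equiv.neg ℤ := by
  simp [kleinPhi, kleinV, PresentedGroup.toGroup.of]

/-- The abelian representation `u ↦ 0`, `v ↦ 1` into `ℤ`. -/
noncomputable def kleinPsi : KleinGroup →* Multiplicative ℤ :=
  PresentedGroup.toGroup (f := fun b => if b then 1 else Multiplicative.ofAdd (1:ℤ))
    (by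
      rintro r hr
      rw [kleinRels, Set.mem_singleton_iff] at hr
      subst hr
      simp only [map_mul, map_inv, FreeGroup.lift_apply_of, if_pos, if_neg]
      group)

lemma kleinPsi_u : kleinPsi kleinU = 1 := by
  simp [kleinPsi, kleinU, PresentedGroup.toGroup.of]

lemma kleinPsi_v : kleinPsi kleinV = Multiplicative.ofAdd (1:ℤ) := by
  simp [kleinPsi, kleinV, PresentedGroup.toGroup.of]

lemma klein_comm_u_v2k (k : ℕ) : Commute kleinU (kleinV ^ (2 * k)) := by
  have h : kleinV ^ (2 * k) = (kleinV ^ (2:ℕ)) ^ k := by rw [← pow_mul]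
  rw [h]
  exact klein_comm_u_v2.pow_right k

lemma klein_x_zpow (k : ℕ) (m : ℤ) :
    (kleinU * kleinV ^ (2 * k)) ^ m = kleinU ^ m * kleinV ^ ((2 * k : ℕ) * m : ℤ) := by
  rw [(klein_comm_u_v2k k).mul_zpow, ← zpow_natCast kleinV (2 * k), ← zpow_mul]

lemma klein_xy_zpow (k : ℕ) (m l : ℤ) :
    (kleinU * kleinV ^ (2 * k)) ^ m * (kleinV ^ (4 * k)) ^ l
      = kleinU ^ m * kleinV ^ (((2 * k : ℕ) : ℤ) * m + ((4 * k : ℕ) : ℤ) * l) := by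
  rw [klein_x_zpow, ← zpow_natCast kleinV (4 * k), ← zpow_mul, mul_assoc, ← zpow_add]

lemma klein_uv_eq_one {a b : ℤ} (h : kleinU ^ a * kleinV ^ b = 1) : a = 0 ∧ b = 0 := by
  have hb : b = 0 := by
    have h2 := congrArg kleinPsi h
    rw [map_mul, map_zpow, map_zpow, kleinPsi_u, kleinPsi_v, map_one kleinPsi,
      one_zpow, one_mul] at h2
    simpa using congrArg Multiplicative.toAdd h2
  subst hb
  rw [zpow_zero, mul_one] at h
  have h3 := congrArg kleinPhi h
  have hzp : ∀ n : ℤ, (Equiv.addRight (1:ℤ)) ^ n = Equiv.addRight (n • (1:ℤ)) := by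
    intro n
    induction n using Int.induction_on with
    | zero => ext x; simp
    | succ i ih => ext x; rw [zpow_add_one, Equiv.Perm.mul_apply, ih]; simp [add_smul]; ring
    | pred i ih => ext x; rw [zpow_sub_one, Equiv.Perm.mul_apply, ih]; simp [sub_smul]; ring
  rw [map_zpow, kleinPhi_u, map_one kleinPhi, hzp] at h3
  have h4 := DFunLike.congr_fun h3 0
  simpa using h4

lemma klein_pow_eq_one (k : ℕ) (hk : 1 ≤ k) (m l : ℤ)
    (h : (kleinU * kleinV ^ (2 * k)) ^ m * (kleinV ^ (4 * k)) ^ l = 1) : m = 0 ∧ l = 0 := by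
  rw [klein_xy_zpow] at h
  obtain ⟨hm, he⟩ := klein_uv_eq_one h
  refine ⟨hm, ?_⟩
  subst hm
  rw [mul_zero, zero_add] at he
  rcases mul_eq_zero.mp he with h' | h'
  · exfalso
    omega
  · exact h'

/-- in the Klein bottle group `K = ⟨u, v | uvuv⁻¹ = 1⟩`, the subgroup generated
by `x := u v^{2k}` and `y := v^{4k}` is isomorphic to `ℤ²` (`x` and `y` commute and generate a
free abelian group of rank `2`), and it equals the kernel of the homomorphism
`θ : K → ℤ/4k` with `θ(u) = 2k` and `θ(v) = 1`. -/
theorem statement13 (k : ℕ) (hk : 1 ≤ k)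
    (θ : KleinGroup →* Multiplicative (ZMod (4 * k)))
    (hu : θ kleinU = Multiplicative.ofAdd ((2 * k : ℕ) : ZMod (4 * k)))
    (hv : θ kleinV = Multiplicative.ofAdd (1 : ZMod (4 * k))) :
    Commute (kleinU * kleinV ^ (2 * k)) (kleinV ^ (4 * k)) ∧
      (∀ m l : ℤ, (kleinU * kleinV ^ (2 * k)) ^ m * (kleinV ^ (4 * k)) ^ l = 1 →
        m = 0 ∧ l = 0) ∧
      Nonempty ((Subgroup.closure {kleinU * kleinV ^ (2 * k), kleinV ^ (4 * k)} :
        Subgroup KleinGroup) ≃* Multiplicative (ℤ × ℤ)) ∧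
      Subgroup.closure {kleinU * kleinV ^ (2 * k), kleinV ^ (4 * k)} = θ.ker := by
  haveI : NeZero (4 * k) := ⟨by omega⟩
  have hcomm : Commute (kleinU * kleinV ^ (2 * k)) (kleinV ^ (4 * k)) := by
    have h1 : Commute kleinU (kleinV ^ (4 * k)) := by
      have h : kleinV ^ (4 * k) = (kleinV ^ (2 : ℕ)) ^ (2 * k) := by rw [← pow_mul]; ring_nf
      rw [h]
      exact klein_comm_u_v2.pow_right _
    have h2 : Commute (kleinV ^ (2 * k)) (kleinV ^ (4 * k)) :=
      (Commute.refl kleinV).pow_pow _ _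
    exact h1.mul_left h2
  have hx_mem : kleinU * kleinV ^ (2 * k) ∈
      Subgroup.closure {kleinU * kleinV ^ (2 * k), kleinV ^ (4 * k)} :=
    Subgroup.subset_closure (Set.mem_insert _ _)
  have hy_mem : kleinV ^ (4 * k) ∈
      Subgroup.closure {kleinU * kleinV ^ (2 * k), kleinV ^ (4 * k)} :=
    Subgroup.subset_closure (Set.mem_insert_of_mem _ rfl)
  refine ⟨hcomm, fun m l h => klein_pow_eq_one k hk m l h, ?_, ?_⟩
  · -- the isomorphism
    let e : Multiplicative (ℤ × ℤ) →* KleinGroup :=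
      MonoidHom.mk' (fun p => (kleinU * kleinV ^ (2 * k)) ^ (Multiplicative.toAdd p).1 *
          (kleinV ^ (4 * k)) ^ (Multiplicative.toAdd p).2) (by
        intro p q
        show (kleinU * kleinV ^ (2 * k)) ^ ((Multiplicative.toAdd p).1 +
              (Multiplicative.toAdd q).1) *
            (kleinV ^ (4 * k)) ^ ((Multiplicative.toAdd p).2 + (Multiplicative.toAdd q).2) = _
        rw [zpow_add, zpow_add,
          (hcomm.zpow_zpow (Multiplicative.toAdd q).1 (Multiplicative.toAdd p).2
            ).mul_mul_mul_comm])
    have hinj : Function.Injective e := by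
      rw [injective_iff_map_eq_one]
      intro p hp
      obtain ⟨hm, hl⟩ := klein_pow_eq_one k hk _ _ hp
      have hp0 : Multiplicative.toAdd p = 0 := Prod.ext hm hl
      exact Multiplicative.toAdd.injective hp0
    have hrange : e.range = Subgroup.closure {kleinU * kleinV ^ (2 * k), kleinV ^ (4 * k)} := by
      apply le_antisymm
      · rintro g ⟨p, rfl⟩
        exact mul_mem (zpow_mem hx_mem _) (zpow_mem hy_mem _)
      · rw [Subgroup.closure_le]
        rintro g (rfl | rfl)
        · refine ⟨Multiplicative.ofAdd (1, 0), ?_⟩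
          show (kleinU * kleinV ^ (2 * k)) ^ (1 : ℤ) * (kleinV ^ (4 * k)) ^ (0 : ℤ) = _
          simp
        · refine ⟨Multiplicative.ofAdd (0, 1), ?_⟩
          show (kleinU * kleinV ^ (2 * k)) ^ (0 : ℤ) * (kleinV ^ (4 * k)) ^ (1 : ℤ) = _
          simp
    exact ⟨(MulEquiv.subgroupCongr hrange.symm).trans (MonoidHom.ofInjective hinj).symm⟩
  · -- closure = ker
    apply le_antisymm
    · rw [Subgroup.closure_le]
      rintro g (rfl | rfl)
      · rw [SetLike.mem_coe, MonoidHom.mem_ker, map_mul, map_pow, hu, hv]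
        have hz : ((2 * k : ℕ) : ZMod (4 * k)) + (2 * k : ℕ) • (1 : ZMod (4 * k)) = 0 := by
          rw [nsmul_eq_mul, mul_one, ← Nat.cast_add, show 2 * k + 2 * k = 4 * k from by ring,
            ZMod.natCast_self]
        rw [← ofAdd_nsmul, ← ofAdd_add, hz, ofAdd_zero]
      · rw [SetLike.mem_coe, MonoidHom.mem_ker, map_pow, hv]
        have hz : (4 * k : ℕ) • (1 : ZMod (4 * k)) = 0 := by
          rw [nsmul_eq_mul, mul_one, ZMod.natCast_self]
        rw [← ofAdd_nsmul, hz, ofAdd_zero]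
    · intro g hg
      obtain ⟨a, b, rfl⟩ := klein_normal_form g
      rw [MonoidHom.mem_ker, map_mul, map_zpow, map_zpow, hu, hv] at hg
      have hdvd : ((4 * k : ℕ) : ℤ) ∣ (2 * (k : ℤ) * a + b) := by
        rw [← ZMod.intCast_zmod_eq_zero_iff_dvd]
        have h2 := congrArg Multiplicative.toAdd hg
        simp only [toAdd_mul, toAdd_zpow, toAdd_ofAdd, toAdd_one] at h2
        rw [zsmul_eq_mul, zsmul_eq_mul, mul_one] at h2
        push_cast at h2 ⊢
        linear_combination h2
      obtain ⟨s, hs⟩ := hdvd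
      have hb : b = ((2 * k : ℕ) : ℤ) * a + ((4 * k : ℕ) : ℤ) * (s - a) := by
        push_cast at hs ⊢
        linarith
      rw [hb, ← klein_xy_zpow k a (s - a)]
      exact mul_mem (zpow_mem hx_mem _) (zpow_mem hy_mem _)
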